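/- Let φ_j, φ be convex functions on ℝ with ∂²φ_j, ∂²φ probability measures, ‖φ_j - φ‖_{L^∞(ℝ)} → 0, and ∂²φ_j ≤ C·φ₀''·dx uniformly in j, where φ₀(x) = log(1+e^x). Then ∫_ℝ φ₀ d(∂²φ_j) → ∫_ℝ φ₀ d(∂²φ). -/

import Mathlib

open MeasureTheory Filter Topology

section Aux

open Set

lemma fmc_hasRightDeriv {f : ℝ → ℝ} (hf : ConvexOn ℝ Set.univ f) (x : ℝ) :
    HasDerivWithinAt f (derivWithin f (Set.Ioi x) x) (Set.Ioi x) x := by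
  have hmono : MonotoneOn (slope f x) (Ioi x) :=
    (hf.slope_mono (mem_univ x)).mono (fun y hy => ⟨mem_univ y, (mem_Ioi.mp hy).ne'⟩)
  have hbdd : BddBelow (slope f x '' Ioi x) := by
    refine ⟨slope f x (x - 1), ?_⟩
    rintro _ ⟨y, hy, rfl⟩
    exact hf.slope_mono (mem_univ x) ⟨mem_univ _, by simp⟩
      ⟨mem_univ y, (mem_Ioi.mp hy).ne'⟩ (by have := mem_Ioi.mp hy; linarith)
  have htends : Tendsto (slope f x) (𝓝[>] x) (𝓝 (sInf (slope f x '' Ioi x))) :=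
    hmono.tendsto_nhdsGT hbdd
  have H : HasDerivWithinAt f (sInf (slope f x '' Ioi x)) (Ioi x) x := by
    rw [hasDerivWithinAt_iff_tendsto_slope, Set.diff_singleton_eq_self notMem_Ioi_self]
    exact htends
  rw [H.derivWithin (uniqueDiffWithinAt_Ioi x)]
  exact H

lemma fmc_rightDeriv_le_slope {f : ℝ → ℝ} (hf : ConvexOn ℝ Set.univ f) {x y : ℝ} (hxy : x < y) :
    derivWithin f (Set.Ioi x) x ≤ slope f x y :=
  hf.rightDeriv_le_slope (mem_univ x) (mem_univ y) hxy
    (fmc_hasRightDeriv hf x).differentiableWithinAt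

lemma fmc_slope_le_rightDeriv {f : ℝ → ℝ} (hf : ConvexOn ℝ Set.univ f) {y x : ℝ} (hyx : y < x) :
    slope f y x ≤ derivWithin f (Set.Ioi x) x := by
  have H := fmc_hasRightDeriv hf x
  rw [hasDerivWithinAt_iff_tendsto_slope, Set.diff_singleton_eq_self notMem_Ioi_self] at H
  refine ge_of_tendsto H ?_
  filter_upwards [self_mem_nhdsWithin] with z hz
  have hz' : x < z := mem_Ioi.mp hz
  rw [slope_comm]
  exact hf.slope_mono (mem_univ x) ⟨mem_univ y, hyx.ne⟩ ⟨mem_univ z, hz'.ne'⟩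
    (hyx.le.trans hz'.le)

lemma fmc_rightDeriv_mono {f : ℝ → ℝ} (hf : ConvexOn ℝ Set.univ f) :
    Monotone (fun x => derivWithin f (Set.Ioi x) x) := by
  intro a b hab
  rcases eq_or_lt_of_le hab with rfl | h
  · exact le_rfl
  calc derivWithin f (Set.Ioi a) a ≤ slope f a b := fmc_rightDeriv_le_slope hf h
    _ ≤ derivWithin f (Set.Ioi b) b := fmc_slope_le_rightDeriv hf h

lemma fmc_slope_close {f g : ℝ → ℝ} {ε : ℝ} (hfg : ∀ t, |f t - g t| ≤ ε) {u v : ℝ}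
    (huv : u < v) : |slope f u v - slope g u v| ≤ 2 * ε / (v - u) := by
  have hv : 0 < v - u := sub_pos.mpr huv
  rw [slope_def_field, slope_def_field, div_sub_div_same, abs_div, abs_of_pos hv]
  have e1 := abs_le.mp (hfg u)
  have e2 := abs_le.mp (hfg v)
  have hnum : |f v - f u - (g v - g u)| ≤ 2 * ε := abs_le.mpr ⟨by linarith, by linarith⟩
  gcongr

lemma fmc_rightDeriv_tendsto {φ : ℕ → ℝ → ℝ} {ψ : ℝ → ℝ}
    (hconv : ∀ j, ConvexOn ℝ Set.univ (φ j))
    (hunif : ∀ ε > 0, ∃ N, ∀ j ≥ N, ∀ x, |φ j x - ψ x| ≤ ε)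
    {x : ℝ} (hx : DifferentiableAt ℝ ψ x) :
    Tendsto (fun j => derivWithin (φ j) (Set.Ioi x) x) atTop
      (𝓝 (derivWithin ψ (Set.Ioi x) x)) := by
  have hGx : derivWithin ψ (Set.Ioi x) x = deriv ψ x :=
    (hx.hasDerivAt.hasDerivWithinAt).derivWithin (uniqueDiffWithinAt_Ioi x)
  rw [hGx, Metric.tendsto_atTop]
  intro δ hδ
  have hslope := hasDerivAt_iff_tendsto_slope.mp hx.hasDerivAt
  rw [Metric.tendsto_nhdsWithin_nhds] at hslope
  obtain ⟨ε, hε, hε'⟩ := hslope (δ/4) (by linarith)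
  set h : ℝ := ε/2 with hh
  have hh0 : 0 < h := by positivity
  have hs1 : |slope ψ x (x + h) - deriv ψ x| < δ/4 := by
    have := hε' (x := x + h) (by simp [hh0.ne'])
      (by rw [Real.dist_eq]; simp [abs_of_pos hh0]; linarith)
    rwa [Real.dist_eq] at this
  have hs2 : |slope ψ (x - h) x - deriv ψ x| < δ/4 := by
    have := hε' (x := x - h) (by simp [hh0.ne]; intro hc; linarith)
      (by rw [Real.dist_eq, show x - h - x = -h by ring, abs_neg, abs_of_pos hh0]; linarith)
    rw [Real.dist_eq] at this
    rwa [slope_comm]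
  obtain ⟨N, hN⟩ := hunif (h * δ / 8) (by positivity)
  refine ⟨N, fun j hj => ?_⟩
  have hfg : ∀ t, |φ j t - ψ t| ≤ h * δ / 8 := hN j hj
  have hc1 : |slope (φ j) x (x + h) - slope ψ x (x + h)| ≤ δ / 4 := by
    have := fmc_slope_close hfg (show x < x + h by linarith)
    have he : 2 * (h * δ / 8) / (x + h - x) = δ / 4 := by field_simp [hh0.ne']; ring
    rwa [he] at this
  have hc2 : |slope (φ j) (x - h) x - slope ψ (x - h) x| ≤ δ / 4 := by
    have := fmc_slope_close hfg (show x - h < x by linarith)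
    have he : 2 * (h * δ / 8) / (x - (x - h)) = δ / 4 := by field_simp [hh0.ne']; ring
    rwa [he] at this
  have hub : derivWithin (φ j) (Set.Ioi x) x ≤ slope (φ j) x (x + h) :=
    fmc_rightDeriv_le_slope (hconv j) (by linarith)
  have hlb : slope (φ j) (x - h) x ≤ derivWithin (φ j) (Set.Ioi x) x :=
    fmc_slope_le_rightDeriv (hconv j) (by linarith)
  rw [Real.dist_eq]
  have a1 := abs_le.mp hc1
  have a2 := abs_le.mp hc2
  have b1 := abs_lt.mp hs1
  have b2 := abs_lt.mp hs2
  exact abs_lt.mpr ⟨by linarith, by linarith⟩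

lemma fmc_ae_differentiable {ψ : ℝ → ℝ} (hψ : ConvexOn ℝ Set.univ ψ) :
    ∀ᵐ x, DifferentiableAt ℝ ψ x := by
  have main : ∀ n : ℕ, ∀ᵐ x, x ∈ Ioi (-(n : ℝ)) → DifferentiableAt ℝ ψ x := by
    intro n
    set c : ℝ := derivWithin ψ (Ioi (-(n : ℝ))) (-(n : ℝ)) with hc
    have hFmono : Monotone (fun x => ψ (max x (-(n : ℝ))) - c * max x (-(n : ℝ))) := by
      intro x y hxy
      simp only
      have hab : max x (-(n : ℝ)) ≤ max y (-(n : ℝ)) := max_le_max hxy le_rfl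
      have han : -(n : ℝ) ≤ max x (-(n : ℝ)) := le_max_right _ _
      rcases eq_or_lt_of_le hab with h | h
      · rw [h]
      · have h1 : c ≤ slope ψ (max x (-(n : ℝ))) (max y (-(n : ℝ))) :=
          le_trans (fmc_rightDeriv_mono hψ han) (fmc_rightDeriv_le_slope hψ h)
        rw [slope_def_field] at h1
        have hba : 0 < max y (-(n : ℝ)) - max x (-(n : ℝ)) := sub_pos.mpr h
        have := (le_div_iff₀ hba).mp h1
        nlinarith
    filter_upwards [hFmono.ae_differentiableAt] with x hFd hx
    have hx' : -(n : ℝ) < x := hx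
    have heq : ψ =ᶠ[𝓝 x]
        (fun t => (ψ (max t (-(n : ℝ))) - c * max t (-(n : ℝ))) + c * t) := by
      filter_upwards [eventually_gt_nhds hx'] with t ht
      simp [max_eq_left ht.le]
    exact (hFd.add (differentiableAt_fun_id.const_mul c)).congr_of_eventuallyEq heq
  have hall := ae_all_iff.mpr main
  filter_upwards [hall] with x hx
  obtain ⟨n, hn⟩ := exists_nat_gt (-x)
  exact hx n (by simp only [mem_Ioi]; linarith)

lemma fmc_hasDerivAt_phi0 (x : ℝ) : HasDerivAt (fun x => Real.log (1 + Real.exp x))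
    (Real.exp x / (1 + Real.exp x)) x := by
  have h1 : HasDerivAt (fun x => 1 + Real.exp x) (Real.exp x) x :=
    (Real.hasDerivAt_exp x).const_add 1
  exact h1.log (by positivity)

lemma fmc_hasDerivAt_m (x : ℝ) : HasDerivAt (fun x => -(1 + Real.exp x)⁻¹)
    (Real.exp x / (1 + Real.exp x) ^ 2) x := by
  have h1 : HasDerivAt (fun x => 1 + Real.exp x) (Real.exp x) x :=
    (Real.hasDerivAt_exp x).const_add 1
  have := (h1.inv (by positivity)).neg
  simp only [neg_div, neg_neg] at this
  exact this

lemma fmc_tendsto_m : Tendsto (fun x => -(1 + Real.exp x)⁻¹) atTop (𝓝 0) := by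
  have h : Tendsto (fun x : ℝ => 1 + Real.exp x) atTop atTop :=
    tendsto_atTop_add_const_left _ 1 Real.tendsto_exp_atTop
  simpa using h.inv_tendsto_atTop.neg

lemma fmc_integrableOn_w (b : ℝ) :
    IntegrableOn (fun x => Real.exp x / (1 + Real.exp x) ^ 2) (Ioi b) := by
  exact integrableOn_Ioi_deriv_of_nonneg' (fun x _ => fmc_hasDerivAt_m x)
    (fun x _ => by positivity) fmc_tendsto_m

lemma fmc_integral_w (b : ℝ) :
    ∫ x in Ioi b, Real.exp x / (1 + Real.exp x) ^ 2 = (1 + Real.exp b)⁻¹ := by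
  rw [integral_Ioi_of_hasDerivAt_of_nonneg' (fun x _ => fmc_hasDerivAt_m x)
    (fun x _ => by positivity) fmc_tendsto_m]
  simp

lemma fmc_integrableOn_sigma (x : ℝ) :
    IntegrableOn (fun s => Real.exp s / (1 + Real.exp s)) (Iic x) := by
  refine (integrableOn_exp_Iic x).mono' ?_ ?_
  · exact (Real.continuous_exp.div (continuous_const.add Real.continuous_exp)
      (fun s => (add_pos one_pos (Real.exp_pos s)).ne')).aestronglyMeasurable
  · filter_upwards with s
    rw [Real.norm_eq_abs, abs_of_nonneg (by positivity)]
    exact div_le_self (Real.exp_pos s).le (by nlinarith [Real.exp_pos s])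

lemma fmc_tendsto_phi0 : Tendsto (fun x => Real.log (1 + Real.exp x)) atBot (𝓝 0) := by
  have h : Tendsto (fun x : ℝ => 1 + Real.exp x) atBot (𝓝 1) := by
    simpa using (tendsto_const_nhds (x := (1:ℝ))).add Real.tendsto_exp_atBot
  have := ((Real.continuousAt_log one_ne_zero).tendsto.comp h)
  rw [Real.log_one] at this
  exact this

lemma fmc_integral_sigma (x : ℝ) :
    ∫ s in Iio x, Real.exp s / (1 + Real.exp s) = Real.log (1 + Real.exp x) := by
  rw [← integral_Iic_eq_integral_Iio,
    integral_Iic_of_hasDerivAt_of_tendsto' (fun s _ => fmc_hasDerivAt_phi0 s)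
      (fmc_integrableOn_sigma x) fmc_tendsto_phi0]
  ring

open ENNReal in
lemma fmc_lintegral_phi0 (m : Measure ℝ) [SFinite m] :
    ∫⁻ x, ENNReal.ofReal (Real.log (1 + Real.exp x)) ∂m
      = ∫⁻ s, ENNReal.ofReal (Real.exp s / (1 + Real.exp s)) * m (Ioi s) := by
  have hσ : Measurable fun s : ℝ => Real.exp s / (1 + Real.exp s) :=
    Real.measurable_exp.div (measurable_const.add Real.measurable_exp)
  set F : ℝ → ℝ → ℝ≥0∞ := fun s x =>
    ENNReal.ofReal (Real.exp s / (1 + Real.exp s)) * (if s < x then (1 : ℝ≥0∞) else 0) with hF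
  have hmeas : Measurable (Function.uncurry F) := by
    apply Measurable.mul
    · exact ((hσ.comp measurable_fst)).ennreal_ofReal
    · exact Measurable.ite (measurableSet_lt measurable_fst measurable_snd)
        measurable_const measurable_const
  have inner1 : ∀ x : ℝ, ∫⁻ s, F s x = ENNReal.ofReal (Real.log (1 + Real.exp x)) := by
    intro x
    have e1 : ∫⁻ s, F s x
        = ∫⁻ s, (Iio x).indicator
            (fun s => ENNReal.ofReal (Real.exp s / (1 + Real.exp s))) s := by
      apply lintegral_congr
      intro s
      by_cases h : s < x <;> simp [hF, indicator, h]
    rw [e1, lintegral_indicator measurableSet_Iio,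
      ← ofReal_integral_eq_lintegral_ofReal
        ((fmc_integrableOn_sigma x).mono_set Iio_subset_Iic_self)
        (by filter_upwards with s using by positivity),
      fmc_integral_sigma x]
  have inner2 : ∀ s : ℝ, ∫⁻ x, F s x ∂m
      = ENNReal.ofReal (Real.exp s / (1 + Real.exp s)) * m (Ioi s) := by
    intro s
    rw [hF]
    simp only
    rw [lintegral_const_mul _
      (Measurable.ite measurableSet_Ioi measurable_const measurable_const)]
    congr 1
    have : ∀ x : ℝ, (if s < x then (1 : ℝ≥0∞) else 0) = (Ioi s).indicator (fun _ => 1) x := by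
      intro x; by_cases h : s < x <;> simp [indicator, h]
    rw [lintegral_congr this, lintegral_indicator measurableSet_Ioi]; simp
  calc ∫⁻ x, ENNReal.ofReal (Real.log (1 + Real.exp x)) ∂m
      = ∫⁻ x, ∫⁻ s, F s x ∂volume ∂m := (lintegral_congr fun x => (inner1 x)).symm
    _ = ∫⁻ s, ∫⁻ x, F s x ∂m ∂volume := (lintegral_lintegral_swap hmeas.aemeasurable).symm
    _ = ∫⁻ s, ENNReal.ofReal (Real.exp s / (1 + Real.exp s)) * m (Ioi s) :=
        lintegral_congr fun s => inner2 s

end Aux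

/-- If `φ_j, φ` are convex on `ℝ` with `∂²φ_j, ∂²φ` probability measures,
`‖φ_j - φ‖_{L^∞(ℝ)} → 0`, and `∂²φ_j ≤ C·φ₀''·dx` uniformly in `j` (where
`φ₀(x) = log(1+eˣ)`), then `∫ φ₀ d(∂²φ_j) → ∫ φ₀ d(∂²φ)`. -/
theorem first_moments_converge (φ : ℕ → ℝ → ℝ) (ψ : ℝ → ℝ) (C : ℝ)
    (μ : ℕ → Measure ℝ) (ν : Measure ℝ)
    (hconv : ∀ j, ConvexOn ℝ Set.univ (φ j)) (hψ : ConvexOn ℝ Set.univ ψ)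
    (hprob : ∀ j, IsProbabilityMeasure (μ j)) (hνprob : IsProbabilityMeasure ν)
    -- `μ j = ∂²(φ j)` and `ν = ∂²ψ`:
    (hμ : ∀ j, ∀ a b : ℝ, a ≤ b →
      μ j (Set.Ioc a b) = ENNReal.ofReal
        (derivWithin (φ j) (Set.Ioi b) b - derivWithin (φ j) (Set.Ioi a) a))
    (hν : ∀ a b : ℝ, a ≤ b →
      ν (Set.Ioc a b) = ENNReal.ofReal
        (derivWithin ψ (Set.Ioi b) b - derivWithin ψ (Set.Ioi a) a))
    -- uniform `L^∞` convergence `φ_j → ψ`: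
    (hunif : ∀ ε > 0, ∃ N, ∀ j ≥ N, ∀ x, |φ j x - ψ x| ≤ ε)
    -- uniform domination `∂²φ_j ≤ C·φ₀''·dx`:
    (hdom : ∀ j, μ j ≤ volume.withDensity
      (fun x => ENNReal.ofReal (C * (Real.exp x / (1 + Real.exp x) ^ 2)))) :
    Tendsto (fun j => ∫ x, Real.log (1 + Real.exp x) ∂(μ j)) atTop
      (𝓝 (∫ x, Real.log (1 + Real.exp x) ∂ν)) := by
  classical
  have := hprob
  have := hνprob
  -- C is nonnegative
  have hC : 0 ≤ C := by
    by_contra hneg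
    push_neg at hneg
    have hzero : ∀ x : ℝ, ENNReal.ofReal (C * (Real.exp x / (1 + Real.exp x) ^ 2)) = 0 := by
      intro x
      refine ENNReal.ofReal_eq_zero.mpr ?_
      have h1 : 0 < Real.exp x / (1 + Real.exp x) ^ 2 := by positivity
      nlinarith
    have h0 : (μ 0) Set.univ ≤ 0 := by
      calc (μ 0) Set.univ
          ≤ volume.withDensity
            (fun x => ENNReal.ofReal (C * (Real.exp x / (1 + Real.exp x) ^ 2))) Set.univ :=
            hdom 0 Set.univ
        _ = ∫⁻ x, ENNReal.ofReal (C * (Real.exp x / (1 + Real.exp x) ^ 2)) := by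
            rw [withDensity_apply _ MeasurableSet.univ, Measure.restrict_univ]
        _ = 0 := by
            rw [lintegral_congr hzero, lintegral_zero]
    rw [(hprob 0).measure_univ] at h0
    simp at h0
  -- uniform tail bound for μ j
  have tailμ : ∀ j, ∀ b : ℝ, μ j (Set.Ioi b) ≤ ENNReal.ofReal (C * (1 + Real.exp b)⁻¹) := by
    intro j b
    calc μ j (Set.Ioi b)
        ≤ volume.withDensity
            (fun x => ENNReal.ofReal (C * (Real.exp x / (1 + Real.exp x) ^ 2)))
            (Set.Ioi b) := hdom j (Set.Ioi b)
      _ = ∫⁻ x in Set.Ioi b, ENNReal.ofReal (C * (Real.exp x / (1 + Real.exp x) ^ 2)) :=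
          withDensity_apply _ measurableSet_Ioi
      _ = ENNReal.ofReal (∫ x in Set.Ioi b, C * (Real.exp x / (1 + Real.exp x) ^ 2)) :=
          (ofReal_integral_eq_lintegral_ofReal ((fmc_integrableOn_w b).const_mul C)
            (by filter_upwards with x using mul_nonneg hC (by positivity))).symm
      _ = ENNReal.ofReal (C * (1 + Real.exp b)⁻¹) := by
          rw [integral_const_mul, fmc_integral_w]
  -- a.e. differentiability of ψ, and unboundedness of the set of differentiability points
  have hD := fmc_ae_differentiable hψ
  have hDunb : ∀ t : ℝ, ∃ b, DifferentiableAt ℝ ψ b ∧ t < b := by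
    intro t
    by_contra hcon
    push_neg at hcon
    have hsub : Set.Ioi t ⊆ {x | ¬ DifferentiableAt ℝ ψ x} := by
      intro x hx hdiff
      exact absurd (hcon x hdiff) (not_le.mpr hx)
    have h2 : (volume : Measure ℝ) (Set.Ioi t) ≤ volume {x | ¬ DifferentiableAt ℝ ψ x} :=
      measure_mono hsub
    rw [ae_iff] at hD
    rw [hD, Real.volume_Ioi] at h2
    exact absurd h2 (by simp)
  -- monotonicity of right derivatives
  have hgmono : ∀ j, Monotone (fun x => derivWithin (φ j) (Set.Ioi x) x) :=
    fun j => fmc_rightDeriv_mono (hconv j)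
  have hGmono : Monotone (fun x => derivWithin ψ (Set.Ioi x) x) := fmc_rightDeriv_mono hψ
  -- tail bound for ν at differentiability points
  have tailν : ∀ b : ℝ, DifferentiableAt ℝ ψ b →
      ν (Set.Ioi b) ≤ ENNReal.ofReal (C * (1 + Real.exp b)⁻¹) := by
    intro b hb
    choose c hc1 hc2 using fun n : ℕ => hDunb (max b n)
    have hcb : ∀ n, b < c n := fun n => (le_max_left _ _).trans_lt (hc2 n)
    have hUnion : Set.Ioi b = ⋃ n, Set.Ioc b (c n) := by
      ext x
      simp only [Set.mem_Ioi, Set.mem_iUnion, Set.mem_Ioc]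
      constructor
      · intro hx
        obtain ⟨n, hn⟩ := exists_nat_ge x
        exact ⟨n, hx, le_of_lt (lt_of_le_of_lt (hn.trans (le_max_right b n)) (hc2 n))⟩
      · rintro ⟨n, h1, _⟩
        exact h1
    have hdir : Directed (· ⊆ ·) (fun n => Set.Ioc b (c n)) := by
      intro m n
      rcases le_total (c m) (c n) with h | h
      · exact ⟨n, Set.Ioc_subset_Ioc_right h, subset_rfl⟩
      · exact ⟨m, subset_rfl, Set.Ioc_subset_Ioc_right h⟩
    rw [hUnion, hdir.measure_iUnion]
    refine iSup_le fun n => ?_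
    rw [hν b (c n) (hcb n).le]
    have hlim : Tendsto (fun j => ENNReal.ofReal
        (derivWithin (φ j) (Set.Ioi (c n)) (c n) - derivWithin (φ j) (Set.Ioi b) b)) atTop
        (𝓝 (ENNReal.ofReal (derivWithin ψ (Set.Ioi (c n)) (c n) - derivWithin ψ (Set.Ioi b) b))) :=
      (ENNReal.continuous_ofReal.tendsto _).comp
        ((fmc_rightDeriv_tendsto hconv hunif (hc1 n)).sub
          (fmc_rightDeriv_tendsto hconv hunif hb))
    refine le_of_tendsto hlim ?_
    filter_upwards with j
    rw [← hμ j b (c n) (hcb n).le]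
    exact le_trans (measure_mono Set.Ioc_subset_Ioi_self) (tailμ j b)
  -- pointwise convergence of the tail measures at differentiability points
  have hpt : ∀ s : ℝ, DifferentiableAt ℝ ψ s →
      Tendsto (fun j => μ j (Set.Ioi s)) atTop (𝓝 (ν (Set.Ioi s))) := by
    intro s hs
    have hreal : Tendsto (fun j => (μ j (Set.Ioi s)).toReal) atTop
        (𝓝 ((ν (Set.Ioi s)).toReal)) := by
      rw [Metric.tendsto_atTop]
      intro δ hδ
      have htail0 : Tendsto (fun b : ℝ => C * (1 + Real.exp b)⁻¹) atTop (𝓝 0) := by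
        have h : Tendsto (fun b : ℝ => 1 + Real.exp b) atTop atTop :=
          tendsto_atTop_add_const_left _ 1 Real.tendsto_exp_atTop
        simpa using h.inv_tendsto_atTop.const_mul C
      obtain ⟨t, ht⟩ := eventually_atTop.mp
        (htail0.eventually (gt_mem_nhds (show (0:ℝ) < δ/8 by linarith)))
      obtain ⟨b, hbdiff, hbgt⟩ := hDunb (max s t)
      have hsb : s < b := lt_of_le_of_lt (le_max_left _ _) hbgt
      have hbt : t ≤ b := ((le_max_right s t).trans_lt hbgt).le
      have hbbound : C * (1 + Real.exp b)⁻¹ < δ/8 := ht b hbt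
      have hsplit : ∀ m : Measure ℝ, m (Set.Ioi s) = m (Set.Ioc s b) + m (Set.Ioi b) := by
        intro m
        rw [← Set.Ioc_union_Ioi_eq_Ioi hsb.le]
        exact measure_union (Set.Ioc_disjoint_Ioi le_rfl) measurableSet_Ioi
      have htailμ : ∀ j, (μ j (Set.Ioi b)).toReal ≤ C * (1 + Real.exp b)⁻¹ := by
        intro j
        exact ENNReal.toReal_le_of_le_ofReal (mul_nonneg hC (by positivity)) (tailμ j b)
      have htailν : (ν (Set.Ioi b)).toReal ≤ C * (1 + Real.exp b)⁻¹ :=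
        ENNReal.toReal_le_of_le_ofReal (mul_nonneg hC (by positivity)) (tailν b hbdiff)
      obtain ⟨N₁, hN₁⟩ := Metric.tendsto_atTop.mp
        (fmc_rightDeriv_tendsto hconv hunif hs) (δ/8) (by linarith)
      obtain ⟨N₂, hN₂⟩ := Metric.tendsto_atTop.mp
        (fmc_rightDeriv_tendsto hconv hunif hbdiff) (δ/8) (by linarith)
      refine ⟨max N₁ N₂, fun j hj => ?_⟩
      have hj1 := hN₁ j (le_trans (le_max_left _ _) hj)
      have hj2 := hN₂ j (le_trans (le_max_right _ _) hj)
      rw [Real.dist_eq] at hj1 hj2 ⊢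
      have e1 : (μ j (Set.Ioi s)).toReal
          = (derivWithin (φ j) (Set.Ioi b) b - derivWithin (φ j) (Set.Ioi s) s)
            + (μ j (Set.Ioi b)).toReal := by
        rw [hsplit (μ j), ENNReal.toReal_add (measure_ne_top _ _) (measure_ne_top _ _),
          hμ j s b hsb.le, ENNReal.toReal_ofReal (sub_nonneg.mpr (hgmono j hsb.le))]
      have e2 : (ν (Set.Ioi s)).toReal
          = (derivWithin ψ (Set.Ioi b) b - derivWithin ψ (Set.Ioi s) s)
            + (ν (Set.Ioi b)).toReal := by
        rw [hsplit ν, ENNReal.toReal_add (measure_ne_top _ _) (measure_ne_top _ _),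
          hν s b hsb.le, ENNReal.toReal_ofReal (sub_nonneg.mpr (hGmono hsb.le))]
      have hμtail_nonneg : 0 ≤ (μ j (Set.Ioi b)).toReal := ENNReal.toReal_nonneg
      have hνtail_nonneg : 0 ≤ (ν (Set.Ioi b)).toReal := ENNReal.toReal_nonneg
      have a1 := abs_lt.mp hj1
      have a2 := abs_lt.mp hj2
      rw [e1, e2]
      have hμt := htailμ j
      refine abs_lt.mpr ⟨by linarith, by linarith⟩
    have hcomp := (ENNReal.continuous_ofReal.tendsto _).comp hreal
    have h2 : ENNReal.ofReal ((ν (Set.Ioi s)).toReal) = ν (Set.Ioi s) :=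
      ENNReal.ofReal_toReal (measure_ne_top _ _)
    rw [Function.comp_def] at hcomp
    rw [h2] at hcomp
    exact hcomp.congr fun j => ENNReal.ofReal_toReal (measure_ne_top _ _)
  -- the dominating function
  set B : ℝ → ENNReal := fun s =>
    min (ENNReal.ofReal (Real.exp s)) (ENNReal.ofReal (C * Real.exp (-s))) with hB
  have hBfin : ∫⁻ s, B s ≠ ⊤ := by
    have hsplit : ∫⁻ s, B s = (∫⁻ s in Set.Iic 0, B s) + ∫⁻ s in Set.Ioi 0, B s := by
      rw [← Set.compl_Iic]
      exact (lintegral_add_compl _ measurableSet_Iic).symm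
    have h1 : ∫⁻ s in Set.Iic 0, B s ≤ ENNReal.ofReal (∫ s in Set.Iic (0:ℝ), Real.exp s) := by
      rw [ofReal_integral_eq_lintegral_ofReal (integrableOn_exp_Iic 0)
        (by filter_upwards with s using (Real.exp_pos s).le)]
      exact lintegral_mono fun s => min_le_left _ _
    have hint2 : IntegrableOn (fun s : ℝ => C * Real.exp (-s)) (Set.Ioi (0:ℝ)) := by
      have h := exp_neg_integrableOn_Ioi (0:ℝ) (one_pos)
      have h2 := h.const_mul C
      simp only [neg_one_mul] at h2
      exact h2
    have h2 : ∫⁻ s in Set.Ioi 0, B s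
        ≤ ENNReal.ofReal (∫ s in Set.Ioi (0:ℝ), C * Real.exp (-s)) := by
      rw [ofReal_integral_eq_lintegral_ofReal hint2
        (by filter_upwards with s using mul_nonneg hC (Real.exp_pos (-s)).le)]
      exact lintegral_mono fun s => min_le_right _ _
    rw [hsplit]
    exact ENNReal.add_ne_top.mpr
      ⟨(h1.trans_lt ENNReal.ofReal_lt_top).ne, (h2.trans_lt ENNReal.ofReal_lt_top).ne⟩
  -- pointwise bound
  have hbound : ∀ (m : Measure ℝ), IsProbabilityMeasure m → ∀ s : ℝ,
      m (Set.Ioi s) ≤ ENNReal.ofReal (C * (1 + Real.exp s)⁻¹) →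
      ENNReal.ofReal (Real.exp s / (1 + Real.exp s)) * m (Set.Ioi s) ≤ B s := by
    intro m hm s hms
    have hσ1 : Real.exp s / (1 + Real.exp s) ≤ 1 :=
      (div_le_one (by positivity)).mpr (by linarith [Real.exp_pos s])
    refine le_min ?_ ?_
    · calc ENNReal.ofReal (Real.exp s / (1 + Real.exp s)) * m (Set.Ioi s)
          ≤ ENNReal.ofReal (Real.exp s / (1 + Real.exp s)) * 1 := by
            gcongr
            exact prob_le_one
        _ = ENNReal.ofReal (Real.exp s / (1 + Real.exp s)) := mul_one _
        _ ≤ ENNReal.ofReal (Real.exp s) := ENNReal.ofReal_le_ofReal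
            (div_le_self (Real.exp_pos s).le (by nlinarith [Real.exp_pos s]))
    · calc ENNReal.ofReal (Real.exp s / (1 + Real.exp s)) * m (Set.Ioi s)
          ≤ 1 * m (Set.Ioi s) := by
            gcongr
            exact ENNReal.ofReal_le_one.mpr hσ1
        _ = m (Set.Ioi s) := one_mul _
        _ ≤ ENNReal.ofReal (C * (1 + Real.exp s)⁻¹) := hms
        _ ≤ ENNReal.ofReal (C * Real.exp (-s)) := by
            refine ENNReal.ofReal_le_ofReal ?_
            have : (1 + Real.exp s)⁻¹ ≤ Real.exp (-s) := by
              rw [Real.exp_neg]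
              exact inv_anti₀ (Real.exp_pos s) (by linarith)
            exact mul_le_mul_of_nonneg_left this hC
  -- measurability
  have hσmeas : Measurable fun s : ℝ => Real.exp s / (1 + Real.exp s) :=
    Real.measurable_exp.div (measurable_const.add Real.measurable_exp)
  have hFmeas : ∀ j, Measurable (fun s =>
      ENNReal.ofReal (Real.exp s / (1 + Real.exp s)) * μ j (Set.Ioi s)) := by
    intro j
    exact (hσmeas.ennreal_ofReal).mul
      (Antitone.measurable (fun a b hab => measure_mono (Set.Ioi_subset_Ioi hab)))
  -- dominated convergence for the lintegrals
  have hconvAE : ∀ᵐ s, Tendsto (fun j =>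
      ENNReal.ofReal (Real.exp s / (1 + Real.exp s)) * μ j (Set.Ioi s)) atTop
      (𝓝 (ENNReal.ofReal (Real.exp s / (1 + Real.exp s)) * ν (Set.Ioi s))) := by
    filter_upwards [hD] with s hs
    exact ENNReal.Tendsto.const_mul (hpt s hs) (Or.inr ENNReal.ofReal_ne_top)
  have hboundAE : ∀ j, (fun s =>
      ENNReal.ofReal (Real.exp s / (1 + Real.exp s)) * μ j (Set.Ioi s)) ≤ᵐ[volume] B :=
    fun j => Filter.Eventually.of_forall (fun s => hbound (μ j) (hprob j) s (tailμ j s))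
  have hlim := tendsto_lintegral_of_dominated_convergence B hFmeas hboundAE hBfin hconvAE
  have hνfin : ∫⁻ s, ENNReal.ofReal (Real.exp s / (1 + Real.exp s)) * ν (Set.Ioi s) ≠ ⊤ := by
    refine ne_top_of_le_ne_top hBfin (lintegral_mono_ae ?_)
    filter_upwards [hD] with s hs
    exact hbound ν hνprob s (tailν s hs)
  -- conversion of Bochner integrals to lintegrals
  have hφ0cont : Continuous fun x : ℝ => Real.log (1 + Real.exp x) :=
    (continuous_const.add Real.continuous_exp).log (fun x => (add_pos one_pos (Real.exp_pos x)).ne')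
  have hφ0nn : ∀ x : ℝ, 0 ≤ Real.log (1 + Real.exp x) :=
    fun x => Real.log_nonneg (by nlinarith [Real.exp_pos x])
  have heq1 : ∀ j, ∫ x, Real.log (1 + Real.exp x) ∂(μ j)
      = (∫⁻ s, ENNReal.ofReal (Real.exp s / (1 + Real.exp s)) * μ j (Set.Ioi s)).toReal := by
    intro j
    rw [integral_eq_lintegral_of_nonneg_ae (Filter.Eventually.of_forall hφ0nn)
      hφ0cont.aestronglyMeasurable, fmc_lintegral_phi0]
  have heq2 : ∫ x, Real.log (1 + Real.exp x) ∂ν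
      = (∫⁻ s, ENNReal.ofReal (Real.exp s / (1 + Real.exp s)) * ν (Set.Ioi s)).toReal := by
    rw [integral_eq_lintegral_of_nonneg_ae (Filter.Eventually.of_forall hφ0nn)
      hφ0cont.aestronglyMeasurable, fmc_lintegral_phi0]
  rw [heq2]
  exact (((ENNReal.tendsto_toReal hνfin).comp hlim).congr fun j => (heq1 j).symm)
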